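/- Let G be a connected graph on n vertices with a fixed linear ordering of its edges, and let c_k be the number of k-element edge subsets containing no broken cycle. Then z^{k(G)} T_G(z+1, 0) = Σ_{k} c_k z^{n-k} as polynomials in z, where k(G)=1. -/

import Mathlib

open SimpleGraph Finset
open scoped Classical

/-- The number of connected components of the graph on `V` with edge set `A`. -/
noncomputable def numComponents {V : Type*} (A : Set (Sym2 V)) : ℕ :=
  Nat.card (SimpleGraph.fromEdgeSet A).ConnectedComponent

/-- The Tutte polynomial of a finite simple graph, via the subset expansion
`T_G(x,y) = Σ_{A ⊆ E} (x-1)^(k(A)-k(E)) (y-1)^(k(A)+|A|-v(G))`. -/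
noncomputable def tutte {V : Type*} [Fintype V] (G : SimpleGraph V) (x y : ℝ) : ℝ :=
  ∑ A ∈ G.edgeFinset.powerset,
    (x - 1) ^ (numComponents (A : Set (Sym2 V)) - numComponents G.edgeSet) *
      (y - 1) ^ (numComponents (A : Set (Sym2 V)) + A.card - Fintype.card V)

/-- `A` contains a broken cycle with respect to the edge ordering `ord`: there is a cycle of
`G` all of whose edges, except the one of highest index, belong to `A`. -/
def ContainsBrokenCycle {V : Type*} (G : SimpleGraph V) (ord : Sym2 V → ℕ)
    (A : Finset (Sym2 V)) : Prop :=
  ∃ (v : V) (w : G.Walk v v), w.IsCycle ∧ ∃ e ∈ w.edges,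
    (∀ f ∈ w.edges, ord f ≤ ord e) ∧ ∀ f ∈ w.edges, f ≠ e → f ∈ A

/-- The number of `k`-element edge subsets of `G` containing no broken cycle. -/
noncomputable def bcFreeCount {V : Type*} [Fintype V] (G : SimpleGraph V)
    (ord : Sym2 V → ℕ) (k : ℕ) : ℕ :=
  (G.edgeFinset.powerset.filter
    (fun A : Finset (Sym2 V) => A.card = k ∧ ¬ContainsBrokenCycle G ord A)).card

namespace WhitneyBC

variable {V : Type*}

private lemma sym2_exists_rep (e : Sym2 V) : ∃ u v, e = s(u, v) := by
  induction e using Sym2.ind with | _ u v => exact ⟨u, v, rfl⟩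

private lemma reach_insert_iff {S : Set (Sym2 V)} {u v : V} (huv : u ≠ v) {x y : V} :
    (fromEdgeSet (insert s(u, v) S)).Reachable x y ↔
      (fromEdgeSet S).Reachable x y ∨
        ((fromEdgeSet S).Reachable x u ∧ (fromEdgeSet S).Reachable v y) ∨
        ((fromEdgeSet S).Reachable x v ∧ (fromEdgeSet S).Reachable u y) := by
  constructor
  · rintro ⟨w⟩
    induction w with
    | nil => exact Or.inl (Reachable.refl _)
    | @cons a b c h p ih =>
      rw [fromEdgeSet_adj _, Set.mem_insert_iff, Sym2.eq_iff] at h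
      obtain ⟨(⟨rfl, rfl⟩ | ⟨rfl, rfl⟩) | hS, hab⟩ := h
      · rcases ih with h1 | ⟨h1, h2⟩ | ⟨h1, h2⟩
        · exact Or.inr (Or.inl ⟨Reachable.refl _, h1⟩)
        · exact Or.inl (h1.symm.trans h2)
        · exact Or.inl h2
      · rcases ih with h1 | ⟨h1, h2⟩ | ⟨h1, h2⟩
        · exact Or.inr (Or.inr ⟨Reachable.refl _, h1⟩)
        · exact Or.inl h2
        · exact Or.inl (h1.symm.trans h2)
      · have hadj : (fromEdgeSet S).Reachable a b :=
          ((fromEdgeSet_adj _).mpr ⟨hS, hab⟩).reachable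
        rcases ih with h1 | ⟨h1, h2⟩ | ⟨h1, h2⟩
        · exact Or.inl (hadj.trans h1)
        · exact Or.inr (Or.inl ⟨hadj.trans h1, h2⟩)
        · exact Or.inr (Or.inr ⟨hadj.trans h1, h2⟩)
  · have hle : fromEdgeSet S ≤ fromEdgeSet (insert s(u, v) S) :=
      fromEdgeSet_mono (Set.subset_insert _ _)
    have hadj : (fromEdgeSet (insert s(u, v) S)).Adj u v :=
      (fromEdgeSet_adj _).mpr ⟨Set.mem_insert _ _, huv⟩
    rintro (h | ⟨h1, h2⟩ | ⟨h1, h2⟩)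
    · exact h.mono hle
    · exact ((h1.mono hle).trans hadj.reachable).trans (h2.mono hle)
    · exact ((h1.mono hle).trans hadj.symm.reachable).trans (h2.mono hle)

private lemma card_cc_eq_of_reach_iff {G₁ G₂ : SimpleGraph V}
    (h : ∀ x y, G₁.Reachable x y ↔ G₂.Reachable x y) :
    Nat.card G₁.ConnectedComponent = Nat.card G₂.ConnectedComponent :=
  Nat.card_congr (Quot.congr (Equiv.refl V) (by simpa using h))

private lemma K_insert_of_reach {A : Set (Sym2 V)} {u v : V} (huv : u ≠ v)
    (h : (fromEdgeSet A).Reachable u v) :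
    numComponents (insert s(u, v) A) = numComponents A := by
  refine card_cc_eq_of_reach_iff fun x y => ?_
  rw [reach_insert_iff huv]
  constructor
  · rintro (h1 | ⟨h1, h2⟩ | ⟨h1, h2⟩)
    exacts [h1, (h1.trans h).trans h2, (h1.trans h.symm).trans h2]
  · exact Or.inl

private lemma K_insert_of_not_reach [Fintype V] {A : Set (Sym2 V)} {u v : V} (huv : u ≠ v)
    (h : ¬(fromEdgeSet A).Reachable u v) :
    numComponents A = numComponents (insert s(u, v) A) + 1 := by
  classical
  set G₁ := fromEdgeSet A with hG₁
  set G₂ := fromEdgeSet (insert s(u, v) A) with hG₂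
  letI : Fintype G₁.ConnectedComponent := Fintype.ofFinite _
  letI : Fintype G₂.ConnectedComponent := Fintype.ofFinite _
  set φ : G₁.ConnectedComponent → G₂.ConnectedComponent :=
    ConnectedComponent.map
      (Hom.ofLE (fromEdgeSet_mono (Set.subset_insert _ _))) with hφ
  have hφmk : ∀ x : V, φ (G₁.connectedComponentMk x) = G₂.connectedComponentMk x :=
    fun x => rfl
  have hkey : ∀ c d, φ c = φ d ↔ c = d ∨
      (c = G₁.connectedComponentMk u ∧ d = G₁.connectedComponentMk v) ∨
      (c = G₁.connectedComponentMk v ∧ d = G₁.connectedComponentMk u) := by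
    refine ConnectedComponent.ind₂ fun x y => ?_
    rw [hφmk, hφmk]
    simp only [ConnectedComponent.eq]
    rw [hG₂, reach_insert_iff huv]
    constructor
    · rintro (h1 | ⟨h1, h2⟩ | ⟨h1, h2⟩)
      exacts [Or.inl h1, Or.inr (Or.inl ⟨h1, h2.symm⟩), Or.inr (Or.inr ⟨h1, h2.symm⟩)]
    · rintro (h1 | ⟨h1, h2⟩ | ⟨h1, h2⟩)
      exacts [Or.inl h1, Or.inr (Or.inl ⟨h1, h2.symm⟩), Or.inr (Or.inr ⟨h1, h2.symm⟩)]
  have hsurj : Function.Surjective φ :=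
    ConnectedComponent.ind fun x => ⟨G₁.connectedComponentMk x, rfl⟩
  have hne : G₁.connectedComponentMk u ≠ G₁.connectedComponentMk v :=
    fun hc => h (ConnectedComponent.exact hc)
  have h1 : Finset.univ.image φ = Finset.univ := Finset.image_univ_of_surjective hsurj
  have h2 : (Finset.univ.erase (G₁.connectedComponentMk v)).image φ = Finset.univ.image φ := by
    apply Finset.Subset.antisymm (Finset.image_subset_image (Finset.erase_subset _ _))
    intro c hc
    obtain ⟨d, -, rfl⟩ := Finset.mem_image.mp hc
    by_cases hd : d = G₁.connectedComponentMk v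
    · subst hd
      exact Finset.mem_image.mpr ⟨G₁.connectedComponentMk u,
        Finset.mem_erase.mpr ⟨hne, Finset.mem_univ _⟩,
        (hkey _ _).mpr (Or.inr (Or.inl ⟨rfl, rfl⟩))⟩
    · exact Finset.mem_image.mpr ⟨d, Finset.mem_erase.mpr ⟨hd, Finset.mem_univ _⟩, rfl⟩
  have hinj : Set.InjOn φ ↑(Finset.univ.erase (G₁.connectedComponentMk v)) := by
    intro c hc d hd hcd
    rw [Finset.mem_coe, Finset.mem_erase] at hc hd
    rcases (hkey c d).mp hcd with h1 | ⟨h1, h2⟩ | ⟨h1, h2⟩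
    · exact h1
    · exact absurd h2 hd.1
    · exact absurd h1 hc.1
  have hcard : Fintype.card G₂.ConnectedComponent
      = Fintype.card G₁.ConnectedComponent - 1 := by
    rw [← Finset.card_univ, ← h1, ← h2, Finset.card_image_of_injOn hinj,
      Finset.card_erase_of_mem (Finset.mem_univ _), Finset.card_univ]
  have hpos : 0 < Fintype.card G₁.ConnectedComponent :=
    Fintype.card_pos_iff.mpr ⟨G₁.connectedComponentMk u⟩
  rw [numComponents, numComponents, ← hG₁, ← hG₂, Nat.card_eq_fintype_card,
    Nat.card_eq_fintype_card]
  omega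

private lemma K_empty [Fintype V] : numComponents (∅ : Set (Sym2 V)) = Fintype.card V := by
  rw [numComponents, fromEdgeSet_empty]
  have e : (⊥ : SimpleGraph V).ConnectedComponent ≃ V :=
    { toFun := ConnectedComponent.lift id fun v w p _ => reachable_bot.mp ⟨p⟩
      invFun := (⊥ : SimpleGraph V).connectedComponentMk
      left_inv := ConnectedComponent.ind fun v => rfl
      right_inv := fun v => rfl }
  rw [Nat.card_congr e, Nat.card_eq_fintype_card]

private lemma K_pos [Fintype V] [Nonempty V] (A : Set (Sym2 V)) : 1 ≤ numComponents A := by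
  have : Nonempty (fromEdgeSet A).ConnectedComponent :=
    ⟨(fromEdgeSet A).connectedComponentMk (Classical.arbitrary V)⟩
  exact Nat.card_pos

private lemma K_add_card_ge [Fintype V] (A : Finset (Sym2 V))
    (hdiag : ∀ e ∈ A, ¬e.IsDiag) :
    Fintype.card V ≤ numComponents (A : Set (Sym2 V)) + A.card := by
  induction A using Finset.induction_on with
  | empty => simp [K_empty]
  | @insert e A he ih =>
    obtain ⟨u, v, rfl⟩ := sym2_exists_rep e
    have huv : u ≠ v := by
      simpa [Sym2.mk_isDiag_iff] using hdiag s(u, v) (Finset.mem_insert_self _ _)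
    have hA : ∀ f ∈ A, ¬f.IsDiag := fun f hf => hdiag f (Finset.mem_insert_of_mem hf)
    rw [Finset.coe_insert, Finset.card_insert_of_notMem he]
    by_cases hr : (fromEdgeSet (A : Set (Sym2 V))).Reachable u v
    · rw [K_insert_of_reach huv hr]
      have := ih hA; omega
    · have h2 := K_insert_of_not_reach huv hr
      have := ih hA; omega

private lemma acyclic_mono {G H : SimpleGraph V} (h : G ≤ H) (hH : H.IsAcyclic) :
    G.IsAcyclic := fun _ c hc => hH (c.mapLe h) ((Walk.mapLe_isCycle h).mpr hc)

private lemma K_add_card_eq_of_acyclic [Fintype V] (A : Finset (Sym2 V))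
    (hdiag : ∀ e ∈ A, ¬e.IsDiag)
    (hacy : (fromEdgeSet (A : Set (Sym2 V))).IsAcyclic) :
    numComponents (A : Set (Sym2 V)) + A.card = Fintype.card V := by
  induction A using Finset.induction_on with
  | empty => simp [K_empty]
  | @insert e A he ih =>
    obtain ⟨u, v, rfl⟩ := sym2_exists_rep e
    have huv : u ≠ v := by
      simpa [Sym2.mk_isDiag_iff] using hdiag s(u, v) (Finset.mem_insert_self _ _)
    have hA : ∀ f ∈ A, ¬f.IsDiag := fun f hf => hdiag f (Finset.mem_insert_of_mem hf)
    have hle : fromEdgeSet (A : Set (Sym2 V))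
        ≤ fromEdgeSet (↑(insert s(u, v) A) : Set (Sym2 V)) := by
      apply fromEdgeSet_mono
      rw [Finset.coe_insert]
      exact Set.subset_insert _ _
    have hacyA := acyclic_mono hle hacy
    have hadj : (fromEdgeSet (↑(insert s(u, v) A) : Set (Sym2 V))).Adj u v := by
      rw [Finset.coe_insert]
      exact (fromEdgeSet_adj _).mpr ⟨Set.mem_insert _ _, huv⟩
    have hr : ¬(fromEdgeSet (A : Set (Sym2 V))).Reachable u v := by
      intro hr
      obtain ⟨w⟩ := hr.symm
      have hp := w.toPath.2
      set p : (fromEdgeSet (A : Set (Sym2 V))).Walk v u := w.toPath.1 with hpdef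
      have hsubE : ∀ f ∈ p.edges,
          f ∈ (fromEdgeSet (↑(insert s(u, v) A) : Set (Sym2 V))).edgeSet := by
        intro f hf
        have h1 := p.edges_subset_edgeSet hf
        rw [edgeSet_fromEdgeSet] at h1 ⊢
        exact ⟨by rw [Finset.coe_insert]; exact Set.mem_insert_of_mem _ h1.1, h1.2⟩
      have hcyc : (Walk.cons hadj (p.transfer _ hsubE)).IsCycle := by
        rw [Walk.cons_isCycle_iff]
        refine ⟨hp.transfer _, ?_⟩
        rw [Walk.edges_transfer]
        intro hmem
        have h1 := p.edges_subset_edgeSet hmem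
        rw [edgeSet_fromEdgeSet] at h1
        exact he (by exact_mod_cast h1.1)
      exact hacy _ hcyc
    rw [Finset.coe_insert, Finset.card_insert_of_notMem he] at *
    have h2 := K_insert_of_not_reach huv hr
    have := ih hA hacyA
    omega

private lemma acyclic_of_bcFree [Fintype V] {G : SimpleGraph V} {ord : Sym2 V → ℕ}
    {A : Finset (Sym2 V)} (hA : A ⊆ G.edgeFinset)
    (h : ¬ContainsBrokenCycle G ord A) :
    (fromEdgeSet (A : Set (Sym2 V))).IsAcyclic := by
  intro v w hw
  apply h
  have hmemA : ∀ f ∈ w.edges, f ∈ A := by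
    intro f hf
    have h1 := w.edges_subset_edgeSet hf
    rw [edgeSet_fromEdgeSet] at h1
    exact_mod_cast h1.1
  have hsub : ∀ f ∈ w.edges, f ∈ G.edgeSet :=
    fun f hf => SimpleGraph.mem_edgeFinset.mp (hA (hmemA f hf))
  set w' := w.transfer G hsub with hw'
  have hc' : w'.IsCycle := hw.transfer _
  have hedges : w'.edges = w.edges := w.edges_transfer _
  have hnonempty : w'.edges.toFinset.Nonempty := by
    have h3 := hc'.three_le_length
    rw [← w'.length_edges] at h3
    cases hE : w'.edges with
    | nil => rw [hE] at h3; simp at h3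
    | cons a l => exact ⟨a, by simp [hE]⟩
  obtain ⟨e, heT, hmax⟩ := w'.edges.toFinset.exists_max_image ord hnonempty
  exact ⟨v, w', hc', e, List.mem_toFinset.mp heT,
    fun f hf => hmax f (List.mem_toFinset.mpr hf),
    fun f hf _ => hmemA f (by rwa [hedges] at hf)⟩

/-- `e` is the top edge of a broken cycle whose remaining edges lie in `A`. -/
def Activ (G : SimpleGraph V) (ord : Sym2 V → ℕ) (A : Finset (Sym2 V)) (e : Sym2 V) : Prop :=
  ∃ (v : V) (w : G.Walk v v), w.IsCycle ∧ e ∈ w.edges ∧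
    (∀ f ∈ w.edges, ord f ≤ ord e) ∧ ∀ f ∈ w.edges, f ≠ e → f ∈ A

variable {G : SimpleGraph V} {ord : Sym2 V → ℕ} {A B : Finset (Sym2 V)} {e : Sym2 V}

private lemma bc_iff : ContainsBrokenCycle G ord A ↔ ∃ e, Activ G ord A e := by
  constructor
  · rintro ⟨v, w, hc, e, he, h1, h2⟩; exact ⟨e, v, w, hc, he, h1, h2⟩
  · rintro ⟨e, v, w, hc, he, h1, h2⟩; exact ⟨v, w, hc, e, he, h1, h2⟩

private lemma Activ.mem_edgeSet (h : Activ G ord A e) : e ∈ G.edgeSet := by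
  obtain ⟨v, w, -, he, -, -⟩ := h; exact w.edges_subset_edgeSet he

private lemma activ_congr (h : ∀ f, f ≠ e → (f ∈ A ↔ f ∈ B)) :
    Activ G ord A e ↔ Activ G ord B e := by
  constructor
  · rintro ⟨v, w, hc, he, h1, h2⟩
    exact ⟨v, w, hc, he, h1, fun f hf hfe => (h f hfe).mp (h2 f hf hfe)⟩
  · rintro ⟨v, w, hc, he, h1, h2⟩
    exact ⟨v, w, hc, he, h1, fun f hf hfe => (h f hfe).mpr (h2 f hf hfe)⟩

private lemma activ_mono (hAB : A ⊆ B) (h : Activ G ord A e) : Activ G ord B e := by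
  obtain ⟨v, w, hc, he, h1, h2⟩ := h
  exact ⟨v, w, hc, he, h1, fun f hf hfe => hAB (h2 f hf hfe)⟩

/-- The active edge of minimal order. -/
noncomputable def minActive (G : SimpleGraph V) (ord : Sym2 V → ℕ) [Nonempty V]
    (A : Finset (Sym2 V)) : Sym2 V :=
  if h : ∃ e, Activ G ord A e ∧ ∀ f, Activ G ord A f → ord e ≤ ord f then h.choose
  else (Nonempty.map (fun v => s(v, v)) ‹Nonempty V›).some

private lemma minActive_spec [Fintype V] [Nonempty V] (hbc : ∃ e, Activ G ord A e) :
    Activ G ord A (minActive G ord A) ∧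
      ∀ f, Activ G ord A f → ord (minActive G ord A) ≤ ord f := by
  have hex : ∃ e, Activ G ord A e ∧ ∀ f, Activ G ord A f → ord e ≤ ord f := by
    classical
    set T := G.edgeFinset.filter (fun e => Activ G ord A e) with hT
    obtain ⟨e0, he0⟩ := hbc
    have hTne : T.Nonempty :=
      ⟨e0, Finset.mem_filter.mpr ⟨SimpleGraph.mem_edgeFinset.mpr he0.mem_edgeSet, he0⟩⟩
    obtain ⟨e, heT, hmin⟩ := T.exists_min_image ord hTne
    exact ⟨e, (Finset.mem_filter.mp heT).2, fun f hf =>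
      hmin f (Finset.mem_filter.mpr ⟨SimpleGraph.mem_edgeFinset.mpr hf.mem_edgeSet, hf⟩)⟩
  rw [minActive, dif_pos hex]
  exact hex.choose_spec

private lemma minActive_eq [Fintype V] [Nonempty V] (hord : Set.InjOn ord G.edgeSet)
    (h1 : Activ G ord A e) (h2 : ∀ f, Activ G ord A f → ord e ≤ ord f) :
    minActive G ord A = e := by
  obtain ⟨ha, hm⟩ := minActive_spec ⟨e, h1⟩
  exact hord ha.mem_edgeSet h1.mem_edgeSet (le_antisymm (hm e h1) (h2 _ ha))

private lemma min_transfer {e₀ : Sym2 V}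
    (hmin : ∀ f, Activ G ord A f → ord e₀ ≤ ord f) :
    ∀ f, Activ G ord (insert e₀ A) f → ord e₀ ≤ ord f := by
  intro f hf
  obtain ⟨v, w, hc, hfe, hmax, hsub⟩ := hf
  by_cases hfe₀ : f = e₀
  · exact le_of_eq (congrArg ord hfe₀.symm)
  by_cases hmem : e₀ ∈ w.edges
  · exact hmax e₀ hmem
  · refine hmin f ⟨v, w, hc, hfe, hmax, fun g hg hgf => ?_⟩
    rcases Finset.mem_insert.mp (hsub g hg hgf) with h | h
    · exact absurd (h ▸ hg) hmem
    · exact h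

private lemma reachable_of_activ {u v : V}
    (h : Activ G ord A s(u, v)) : (fromEdgeSet (A : Set (Sym2 V))).Reachable u v := by
  obtain ⟨a, w, hc, hmem, -, hsub⟩ := h
  have huvE : s(u, v) ∈ G.edgeSet := w.edges_subset_edgeSet hmem
  set H := fromEdgeSet (insert s(u, v) (A : Set (Sym2 V))) with hH
  have hsubE : ∀ f ∈ w.edges, f ∈ H.edgeSet := by
    intro f hf
    rw [hH, edgeSet_fromEdgeSet]
    refine ⟨?_, G.not_isDiag_of_mem_edgeSet (w.edges_subset_edgeSet hf)⟩
    by_cases hfe : f = s(u, v)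
    · exact Set.mem_insert_iff.mpr (Or.inl hfe)
    · exact Set.mem_insert_iff.mpr (Or.inr (by exact_mod_cast hsub f hf hfe))
  have h2 : H.Adj u v ∧ (H \ fromEdgeSet {s(u, v)}).Reachable u v :=
    (adj_and_reachable_delete_edges_iff_exists_cycle).mpr
      ⟨a, w.transfer H hsubE, hc.transfer _, by rw [Walk.edges_transfer]; exact hmem⟩
  refine h2.2.mono ?_
  rw [← edgeSet_subset_edgeSet]
  intro f hf
  rw [edgeSet_sdiff, Set.mem_diff, hH, edgeSet_fromEdgeSet, edgeSet_fromEdgeSet] at hf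
  obtain ⟨⟨hf1, hf2⟩, hf3⟩ := hf
  rw [edgeSet_fromEdgeSet, Set.mem_diff]
  refine ⟨?_, hf2⟩
  rcases Set.mem_insert_iff.mp hf1 with h | h
  · exact absurd ((show f = s(u, v) → f.IsDiag by simpa using hf3) h) hf2
  · exact h

end WhitneyBC

open WhitneyBC in
/-- Whitney: for a connected graph `G` on `n` vertices with a linear
ordering of its edges, `z ⬝ T_G(z+1, 0) = Σ_k c_k z^{n-k}`. -/
theorem whitney_broken_cycle {V : Type*} [Fintype V] (G : SimpleGraph V)
    (hG : G.Connected) (ord : Sym2 V → ℕ) (hord : Set.InjOn ord G.edgeSet) (z : ℝ) :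
    z * tutte G (z + 1) 0 =
      ∑ k ∈ Finset.range (Fintype.card V + 1),
        (bcFreeCount G ord k : ℝ) * z ^ (Fintype.card V - k) := by
  classical
  haveI : Nonempty V := hG.nonempty
  have hKG : numComponents G.edgeSet = 1 := by
    rw [numComponents, fromEdgeSet_edgeSet, Nat.card_eq_one_iff_unique]
    exact ⟨⟨ConnectedComponent.ind₂ fun a b => ConnectedComponent.sound (hG.preconnected a b)⟩,
      ⟨G.connectedComponentMk (Classical.arbitrary V)⟩⟩
  have hKpos : ∀ A : Finset (Sym2 V), 1 ≤ numComponents (A : Set (Sym2 V)) :=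
    fun A => K_pos _
  have hdiag : ∀ A : Finset (Sym2 V), A ⊆ G.edgeFinset → ∀ e ∈ A, ¬e.IsDiag :=
    fun A hA e he => G.not_isDiag_of_mem_edgeSet (SimpleGraph.mem_edgeFinset.mp (hA he))
  set F : Finset (Sym2 V) → ℝ := fun A =>
    z ^ numComponents (A : Set (Sym2 V)) *
      (-1 : ℝ) ^ (numComponents (A : Set (Sym2 V)) + A.card - Fintype.card V) with hF
  have hstep1 : z * tutte G (z + 1) 0 = ∑ A ∈ G.edgeFinset.powerset, F A := by
    rw [_root_.tutte, Finset.mul_sum]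
    refine Finset.sum_congr rfl fun A hA => ?_
    rw [hKG]
    simp only [hF]
    have h1 : (z + 1 - 1) = z := by ring
    have h0 : ((0 : ℝ) - 1) = -1 := by ring
    rw [h1, h0, ← mul_assoc]
    congr 1
    have hs : numComponents (A : Set (Sym2 V)) - 1 + 1 = numComponents (A : Set (Sym2 V)) :=
      Nat.succ_pred_eq_of_pos (hKpos A)
    conv_lhs => rw [mul_comm]
    rw [← pow_succ, hs]
  rw [hstep1,
    ← Finset.sum_filter_add_sum_filter_not G.edgeFinset.powerset
      (fun A => ContainsBrokenCycle G ord A) F]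
  -- the subsets containing a broken cycle cancel out
  have core : ∀ (A' : Finset (Sym2 V)) (e₀ : Sym2 V), e₀ ∉ A' → A' ⊆ G.edgeFinset →
      Activ G ord A' e₀ → (∀ f, Activ G ord A' f → ord e₀ ≤ ord f) →
      (insert e₀ A' ⊆ G.edgeFinset ∧ ContainsBrokenCycle G ord A' ∧
        ContainsBrokenCycle G ord (insert e₀ A') ∧ F A' + F (insert e₀ A') = 0 ∧
        minActive G ord A' = e₀ ∧ minActive G ord (insert e₀ A') = e₀) := by
    intro A' e₀ hnot hsub hact hmin
    obtain ⟨u, v, rfl⟩ := sym2_exists_rep e₀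
    have he₀E : s(u, v) ∈ G.edgeSet := hact.mem_edgeSet
    have huv : u ≠ v := by
      intro h
      exact G.not_isDiag_of_mem_edgeSet he₀E (by rw [h]; exact Sym2.mk_isDiag_iff.mpr rfl)
    have hBsub : insert s(u, v) A' ⊆ G.edgeFinset :=
      Finset.insert_subset (SimpleGraph.mem_edgeFinset.mpr he₀E) hsub
    have hactB : Activ G ord (insert s(u, v) A') s(u, v) :=
      activ_mono (Finset.subset_insert _ _) hact
    have hminB := min_transfer hmin
    have hminA' : minActive G ord A' = s(u, v) := minActive_eq hord hact hmin
    have hminB' : minActive G ord (insert s(u, v) A') = s(u, v) :=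
      minActive_eq hord hactB hminB
    have hreach : (fromEdgeSet (A' : Set (Sym2 V))).Reachable u v := reachable_of_activ hact
    have hKeq : numComponents (↑(insert s(u, v) A') : Set (Sym2 V))
        = numComponents (A' : Set (Sym2 V)) := by
      rw [Finset.coe_insert]
      exact K_insert_of_reach huv hreach
    have hcard : (insert s(u, v) A').card = A'.card + 1 :=
      Finset.card_insert_of_notMem hnot
    have hge : Fintype.card V ≤ numComponents (A' : Set (Sym2 V)) + A'.card :=
      K_add_card_ge A' (hdiag A' hsub)
    have hFsum : F A' + F (insert s(u, v) A') = 0 := by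
      simp only [hF]
      rw [hKeq, hcard]
      have h1 : numComponents (A' : Set (Sym2 V)) + (A'.card + 1) - Fintype.card V
          = (numComponents (A' : Set (Sym2 V)) + A'.card - Fintype.card V) + 1 := by omega
      rw [h1, pow_succ]
      ring
    exact ⟨hBsub, bc_iff.mpr ⟨_, hact⟩, bc_iff.mpr ⟨_, hactB⟩, hFsum, hminA', hminB'⟩
  have hzero : ∑ A ∈ G.edgeFinset.powerset.filter
      (fun A => ContainsBrokenCycle G ord A), F A = 0 := by
    set gfun : Finset (Sym2 V) → Finset (Sym2 V) := fun A =>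
      if minActive G ord A ∈ A then A.erase (minActive G ord A)
      else insert (minActive G ord A) A with hgfun
    have hmain : ∀ A ∈ G.edgeFinset.powerset.filter
        (fun A => ContainsBrokenCycle G ord A),
        gfun A ∈ G.edgeFinset.powerset.filter (fun A => ContainsBrokenCycle G ord A) ∧
          F A + F (gfun A) = 0 ∧ gfun (gfun A) = A ∧ gfun A ≠ A := by
      intro A hA
      rw [Finset.mem_filter, Finset.mem_powerset] at hA
      obtain ⟨hAsub, hbc⟩ := hA
      obtain ⟨hact, hmin⟩ := minActive_spec (bc_iff.mp hbc)
      set e₀ := minActive G ord A with he₀def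
      by_cases he₀A : e₀ ∈ A
      · -- remove e₀
        set A' := A.erase e₀ with hA'def
        have hnot : e₀ ∉ A' := Finset.notMem_erase _ _
        have hsub : A' ⊆ G.edgeFinset := (Finset.erase_subset _ _).trans hAsub
        have hact' : Activ G ord A' e₀ := by
          refine (activ_congr fun f hf => ?_).mp hact
          rw [hA'def, Finset.mem_erase]
          exact ⟨fun h => ⟨hf, h⟩, fun h => h.2⟩
        have hmin' : ∀ f, Activ G ord A' f → ord e₀ ≤ ord f :=
          fun f hf => hmin f (activ_mono (Finset.erase_subset _ _) hf)
        obtain ⟨hBsub, hbcA', hbcB, hFsum, hminA', hminB'⟩ := core A' e₀ hnot hsub hact' hmin'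
        have hins : insert e₀ A' = A := Finset.insert_erase he₀A
        have hgA : gfun A = A' := by rw [hgfun]; simp only [← he₀def, if_pos he₀A]; rfl
        have hgA' : gfun A' = A := by
          rw [hgfun]
          simp only [hminA', if_neg hnot]
          exact hins
        refine ⟨?_, ?_, ?_, ?_⟩
        · rw [hgA, Finset.mem_filter, Finset.mem_powerset]; exact ⟨hsub, hbcA'⟩
        · rw [hgA]
          rw [hins] at hFsum
          linarith [hFsum]
        · rw [hgA, hgA']
        · rw [hgA, hA'def]
          intro h
          exact (Finset.erase_eq_self.mp h) he₀A
      · -- add e₀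
        obtain ⟨hBsub, hbcA', hbcB, hFsum, hminA', hminB'⟩ :=
          core A e₀ he₀A hAsub hact hmin
        have hgA : gfun A = insert e₀ A := by rw [hgfun]; simp only [← he₀def, if_neg he₀A]
        have hgB : gfun (insert e₀ A) = A := by
          rw [hgfun]
          simp only [hminB', if_pos (Finset.mem_insert_self e₀ A)]
          exact Finset.erase_insert he₀A
        refine ⟨?_, ?_, ?_, ?_⟩
        · rw [hgA, Finset.mem_filter, Finset.mem_powerset]; exact ⟨hBsub, hbcB⟩
        · rw [hgA]; exact hFsum
        · rw [hgA, hgB]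
        · rw [hgA]
          intro h
          exact he₀A (Finset.insert_eq_self.mp h)
    refine Finset.sum_involution (fun A _ => gfun A) ?_ ?_ ?_ ?_
    · intro A hA; exact (hmain A hA).2.1
    · intro A hA _; exact (hmain A hA).2.2.2
    · intro A hA; exact (hmain A hA).1
    · intro A hA; exact (hmain A hA).2.2.1
  rw [hzero, zero_add]
  -- the broken-cycle-free part
  have hmaps : ∀ A ∈ G.edgeFinset.powerset.filter
      (fun A => ¬ContainsBrokenCycle G ord A), A.card ∈ Finset.range (Fintype.card V + 1) := by
    intro A hA
    rw [Finset.mem_filter, Finset.mem_powerset] at hA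
    have h1 := K_add_card_eq_of_acyclic A (hdiag A hA.1) (acyclic_of_bcFree hA.1 hA.2)
    have h2 := hKpos A
    rw [Finset.mem_range]; omega
  rw [← Finset.sum_fiberwise_of_maps_to hmaps F]
  refine Finset.sum_congr rfl fun k hk => ?_
  have hterm : ∀ A ∈ (G.edgeFinset.powerset.filter
      (fun A => ¬ContainsBrokenCycle G ord A)).filter (fun A => A.card = k),
      F A = z ^ (Fintype.card V - k) := by
    intro A hA
    rw [Finset.mem_filter] at hA
    obtain ⟨hA1, hck⟩ := hA
    rw [Finset.mem_filter, Finset.mem_powerset] at hA1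
    have h1 := K_add_card_eq_of_acyclic A (hdiag A hA1.1) (acyclic_of_bcFree hA1.1 hA1.2)
    have h2 := hKpos A
    have hKval : numComponents (A : Set (Sym2 V)) = Fintype.card V - k := by omega
    have hexp : numComponents (A : Set (Sym2 V)) + A.card - Fintype.card V = 0 := by omega
    simp only [hF]
    rw [hexp, pow_zero, mul_one, hKval]
  rw [Finset.sum_congr rfl hterm, Finset.sum_const, nsmul_eq_mul]
  congr 1
  have hset : (G.edgeFinset.powerset.filter
      (fun A => ¬ContainsBrokenCycle G ord A)).filter (fun A => A.card = k)
      = G.edgeFinset.powerset.filter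
        (fun A : Finset (Sym2 V) => A.card = k ∧ ¬ContainsBrokenCycle G ord A) := by
    rw [Finset.filter_filter]
    exact Finset.filter_congr fun A _ => by tauto
  rw [bcFreeCount, hset]
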